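/- Let ν > 1 and let K_ν be the modified Bessel function of the second kind of order ν. Then z K_ν′(z)/K_ν(z) tends to −ν as z → 0⁺, where K_ν′ denotes the derivative of K_ν. -/

import Mathlib

open MeasureTheory Real Filter

noncomputable section

/-- Membership in the class `Φ_d`: continuous on `[0,∞)`, value `1` at `0`, and
`x ↦ φ(‖x‖)` positive definite on `ℝ^d`. -/
def MemPhi (d : ℕ) (φ : ℝ → ℝ) : Prop :=
  ContinuousOn φ (Set.Ici 0) ∧ φ 0 = 1 ∧
    ∀ (N : ℕ) (x : Fin N → EuclideanSpace ℝ (Fin d)) (a : Fin N → ℝ),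
      0 ≤ ∑ k : Fin N, ∑ h : Fin N, a k * a h * φ ‖x k - x h‖

/-- The Zastavnyi operator `K_{ε;β₂,β₁}[φ]`. -/
def zastavnyi (ε β₁ β₂ : ℝ) (φ : ℝ → ℝ) (t : ℝ) : ℝ :=
  (β₂ ^ ε * φ (t / β₂) - β₁ ^ ε * φ (t / β₁)) / (β₂ ^ ε - β₁ ^ ε)

/-- The modified Bessel function of the second kind of order `ν`. -/
def besselK (ν t : ℝ) : ℝ :=
  ∫ u in Set.Ioi (0 : ℝ), Real.exp (-t * Real.cosh u) * Real.cosh (ν * u)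

/-- The Matérn function with smoothness parameter `ν`. -/
def matern (ν t : ℝ) : ℝ :=
  if t = 0 then 1 else 2 ^ (1 - ν) / Real.Gamma ν * t ^ ν * besselK ν t

/-- The Generalized Cauchy function. -/
def genCauchy (δ lam t : ℝ) : ℝ := (1 + t ^ δ) ^ (-(lam / δ))

/-- The Generalized Wendland function. -/
def genWendland (κ μ t : ℝ) : ℝ :=
  if 1 ≤ t then 0
  else if κ = 0 then (1 - t) ^ μ
  else (∫ u in Set.Ioc t 1, u * (u ^ 2 - t ^ 2) ^ (κ - 1) * (1 - u) ^ μ) /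
    (Real.Gamma (2 * κ) * Real.Gamma (μ + 1) / Real.Gamma (2 * κ + μ + 1))

/-- The `d`-dimensional radial Fourier transform of a radial function `x ↦ φ(‖x‖)`,
evaluated at a frequency of norm `z` (taken in the direction of the first coordinate;
the imaginary part vanishes by radial symmetry). -/
def radialFT (d : ℕ) [NeZero d] (φ : ℝ → ℝ) (z : ℝ) : ℝ :=
  (2 * Real.pi) ^ (-(d : ℝ)) *
    ∫ x : EuclideanSpace ℝ (Fin d), Real.cos (z * x 0) * φ ‖x‖

lemma cosh_le_exp_abs (x : ℝ) : Real.cosh x ≤ Real.exp |x| := by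
  have h1 : Real.exp x ≤ Real.exp |x| := Real.exp_le_exp.2 (le_abs_self x)
  have h2 : Real.exp (-x) ≤ Real.exp |x| := Real.exp_le_exp.2 (neg_le_abs x)
  rw [Real.cosh_eq]; linarith

lemma abs_sinh_le_exp_abs (x : ℝ) : |Real.sinh x| ≤ Real.exp |x| := by
  have h1 : Real.exp x ≤ Real.exp |x| := Real.exp_le_exp.2 (le_abs_self x)
  have h2 : Real.exp (-x) ≤ Real.exp |x| := Real.exp_le_exp.2 (neg_le_abs x)
  have h3 := (Real.exp_pos x).le
  have h4 := (Real.exp_pos (-x)).le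
  rw [Real.sinh_eq, abs_le]
  constructor <;> [linarith; linarith]

lemma key_bound {t c : ℝ} (ht : 0 < t) {u : ℝ} (hu : 0 ≤ u) :
    c * u - t * Real.cosh u ≤ 2 * (|c| + 1) ^ 2 / t - u := by
  set y := Real.exp (u / 2) with hy_def
  have hy0 : (0:ℝ) < y := Real.exp_pos _
  have h1 : y * y / 2 ≤ Real.cosh u := by
    rw [Real.cosh_eq, hy_def, ← Real.exp_add]
    have := (Real.exp_pos (-u)).le
    have : Real.exp (u / 2 + u / 2) = Real.exp u := by ring_nf
    rw [this]; linarith [(Real.exp_pos (-u)).le]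
  have hy : u ≤ 2 * y := by
    have := Real.add_one_le_exp (u / 2); rw [← hy_def] at *; linarith
  have hc : c * u ≤ |c| * u := mul_le_mul_of_nonneg_right (le_abs_self c) hu
  have main : (c * u + u - t * Real.cosh u) * t ≤ 2 * (|c| + 1) ^ 2 := by
    nlinarith [sq_nonneg (t * y - 2 * (|c| + 1)),
      mul_le_mul_of_nonneg_left h1 ht.le,
      mul_le_mul_of_nonneg_left hy (mul_nonneg (by positivity : (0:ℝ) ≤ |c| + 1) ht.le),
      mul_le_mul_of_nonneg_right hc ht.le, ht, hy0, abs_nonneg c]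
  have := (le_div_iff₀ ht).2 main
  linarith

lemma integrableOn_exp_sub (t c : ℝ) (ht : 0 < t) :
    IntegrableOn (fun u => Real.exp (c * u - t * Real.cosh u)) (Set.Ioi (0:ℝ)) := by
  have hg : IntegrableOn (fun u : ℝ => Real.exp (2 * (|c| + 1) ^ 2 / t) * Real.exp (-(1:ℝ) * u))
      (Set.Ioi (0:ℝ)) := (exp_neg_integrableOn_Ioi 0 one_pos).const_mul _
  refine hg.mono' ?_ ?_
  · exact (Continuous.aestronglyMeasurable (by fun_prop))
  · filter_upwards [ae_restrict_mem measurableSet_Ioi] with u hu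
    have hb := key_bound ht (le_of_lt hu) (c := c)
    rw [Real.norm_eq_abs, abs_of_pos (Real.exp_pos _)]
    rw [← Real.exp_add]
    apply Real.exp_le_exp.2
    linarith

lemma integrable_of_le_exp {f : ℝ → ℝ} {t : ℝ} (ht : 0 < t) (C c : ℝ)
    (hf : AEStronglyMeasurable f (volume.restrict (Set.Ioi 0)))
    (h : ∀ u ∈ Set.Ioi (0:ℝ), |f u| ≤ C * Real.exp (c * u - t * Real.cosh u)) :
    IntegrableOn f (Set.Ioi (0:ℝ)) := by
  refine ((integrableOn_exp_sub t c ht).const_mul C).mono' hf ?_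
  filter_upwards [ae_restrict_mem measurableSet_Ioi] with u hu
  simpa using h u hu

lemma besselK_integrable (ν t : ℝ) (ht : 0 < t) :
    IntegrableOn (fun u => Real.exp (-t * Real.cosh u) * Real.cosh (ν * u)) (Set.Ioi (0:ℝ)) := by
  refine integrable_of_le_exp ht 1 |ν| (Continuous.aestronglyMeasurable (by fun_prop)) ?_
  intro u hu
  have hu0 : (0:ℝ) ≤ u := le_of_lt hu
  have h2 : Real.cosh (ν * u) ≤ Real.exp (|ν| * u) := by
    have := cosh_le_exp_abs (ν * u)
    rwa [abs_mul, abs_of_nonneg hu0] at this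
  rw [abs_of_nonneg (by positivity), one_mul]
  calc Real.exp (-t * Real.cosh u) * Real.cosh (ν * u)
      ≤ Real.exp (-t * Real.cosh u) * Real.exp (|ν| * u) :=
        mul_le_mul_of_nonneg_left h2 (Real.exp_pos _).le
    _ = Real.exp (-t * Real.cosh u + |ν| * u) := by rw [← Real.exp_add]
    _ = Real.exp (|ν| * u - t * Real.cosh u) := by congr 1; ring

lemma besselK_pos (ν t : ℝ) (ht : 0 < t) : 0 < besselK ν t := by
  rw [besselK]
  have hpos : ∀ u : ℝ, 0 < Real.exp (-t * Real.cosh u) * Real.cosh (ν * u) :=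
    fun u => mul_pos (Real.exp_pos _) (Real.cosh_pos _)
  rw [setIntegral_pos_iff_support_of_nonneg_ae]
  · have : (Function.support fun u => Real.exp (-t * Real.cosh u) * Real.cosh (ν * u)) = Set.univ := by
      ext u; simpa [Function.support] using (hpos u).ne'
    rw [this, Set.univ_inter]
    simp [Real.volume_Ioi]
  · filter_upwards with u; exact (hpos u).le
  · exact besselK_integrable ν t ht

lemma besselK_mono (ν₁ ν₂ t : ℝ) (h1 : 0 ≤ ν₁) (h2 : ν₁ ≤ ν₂) (ht : 0 < t) :
    besselK ν₁ t ≤ besselK ν₂ t := by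
  rw [besselK, besselK]
  refine setIntegral_mono_on (besselK_integrable _ _ ht) (besselK_integrable _ _ ht)
    measurableSet_Ioi ?_
  intro u hu
  have hu0 : (0:ℝ) ≤ u := le_of_lt hu
  refine mul_le_mul_of_nonneg_left ?_ (Real.exp_pos _).le
  rw [Real.cosh_le_cosh, abs_mul, abs_mul, abs_of_nonneg h1, abs_of_nonneg (h1.trans h2)]
  exact mul_le_mul_of_nonneg_right h2 (le_of_lt (lt_of_lt_of_le hu (le_abs_self u))) |>.trans_eq (by rw [abs_of_nonneg hu0])

lemma besselK_hasDerivAt (ν z : ℝ) (hz : 0 < z) :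
    HasDerivAt (besselK ν)
      (-∫ u in Set.Ioi (0:ℝ), Real.cosh u * (Real.exp (-z * Real.cosh u) * Real.cosh (ν * u))) z := by
  have hb : IntegrableOn
      (fun u => Real.exp ((|ν| + 1) * u - z / 2 * Real.cosh u)) (Set.Ioi (0:ℝ)) :=
    integrableOn_exp_sub (z / 2) (|ν| + 1) (by linarith)
  have key := hasDerivAt_integral_of_dominated_loc_of_deriv_le
      (F := fun t u => Real.exp (-t * Real.cosh u) * Real.cosh (ν * u))
      (F' := fun t u => -(Real.cosh u * (Real.exp (-t * Real.cosh u) * Real.cosh (ν * u))))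
      (x₀ := z) (s := Metric.ball z (z / 2))
      (bound := fun u => Real.exp ((|ν| + 1) * u - z / 2 * Real.cosh u))
      (μ := volume.restrict (Set.Ioi 0)) (Metric.ball_mem_nhds z (by linarith))
      (Eventually.of_forall fun x => Continuous.aestronglyMeasurable (by fun_prop))
      ((besselK_integrable ν z hz))
      (Continuous.aestronglyMeasurable (by fun_prop)) ?_ hb ?_
  · have h2 := key.2
    rw [integral_neg] at h2
    exact h2
  · filter_upwards [ae_restrict_mem measurableSet_Ioi] with u hu x hx
    have hu0 : (0:ℝ) ≤ u := le_of_lt hu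
    have hx2 : z / 2 ≤ x := by
      have := abs_lt.1 (mem_ball_iff_norm.1 hx); linarith [this.1]
    have hcosh1 : (1:ℝ) ≤ Real.cosh u := Real.one_le_cosh u
    have e1 : Real.exp (-x * Real.cosh u) ≤ Real.exp (-(z/2) * Real.cosh u) := by
      apply Real.exp_le_exp.2
      have : z / 2 * Real.cosh u ≤ x * Real.cosh u :=
        mul_le_mul_of_nonneg_right hx2 (by linarith)
      linarith
    have e2 : Real.cosh (ν * u) ≤ Real.exp (|ν| * u) := by
      have := cosh_le_exp_abs (ν * u)
      rwa [abs_mul, abs_of_nonneg hu0] at this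
    have e3 : Real.cosh u ≤ Real.exp u := by
      have := cosh_le_exp_abs u; rwa [abs_of_nonneg hu0] at this
    rw [norm_neg, Real.norm_eq_abs, abs_of_nonneg (by positivity)]
    calc Real.cosh u * (Real.exp (-x * Real.cosh u) * Real.cosh (ν * u))
        ≤ Real.exp u * (Real.exp (-(z/2) * Real.cosh u) * Real.exp (|ν| * u)) := by
          apply mul_le_mul e3 ?_ (by positivity) (by positivity)
          exact mul_le_mul e1 e2 (Real.cosh_pos _).le (Real.exp_pos _).le
      _ = Real.exp ((|ν| + 1) * u - z / 2 * Real.cosh u) := by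
          rw [← Real.exp_add, ← Real.exp_add]; congr 1; ring
  · filter_upwards [ae_restrict_mem measurableSet_Ioi] with u _ x _
    have h1 : HasDerivAt (fun t : ℝ => -t * Real.cosh u) (-1 * Real.cosh u) x :=
      (hasDerivAt_id x).neg.mul_const _
    have h2 := (h1.exp).mul_const (Real.cosh (ν * u))
    refine h2.congr_deriv ?_
    ring

lemma besselK_deriv_eq (ν z : ℝ) (hz : 0 < z) :
    deriv (besselK ν) z = -((besselK (ν + 1) z + besselK (ν - 1) z) / 2) := by
  rw [(besselK_hasDerivAt ν z hz).deriv]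
  congr 1
  have hpt : ∀ u : ℝ, Real.cosh u * (Real.exp (-z * Real.cosh u) * Real.cosh (ν * u)) =
      Real.exp (-z * Real.cosh u) * Real.cosh ((ν + 1) * u) / 2 +
      Real.exp (-z * Real.cosh u) * Real.cosh ((ν - 1) * u) / 2 := by
    intro u
    have e1 : (ν + 1) * u = ν * u + u := by ring
    have e2 : (ν - 1) * u = ν * u - u := by ring
    rw [e1, e2, Real.cosh_add, Real.cosh_sub]; ring
  calc (∫ u in Set.Ioi (0:ℝ), Real.cosh u * (Real.exp (-z * Real.cosh u) * Real.cosh (ν * u)))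
      = ∫ u in Set.Ioi (0:ℝ), (Real.exp (-z * Real.cosh u) * Real.cosh ((ν + 1) * u) / 2 +
          Real.exp (-z * Real.cosh u) * Real.cosh ((ν - 1) * u) / 2) := by
        exact integral_congr_ae (Eventually.of_forall fun u => hpt u)
    _ = (∫ u in Set.Ioi (0:ℝ), Real.exp (-z * Real.cosh u) * Real.cosh ((ν + 1) * u) / 2) +
        ∫ u in Set.Ioi (0:ℝ), Real.exp (-z * Real.cosh u) * Real.cosh ((ν - 1) * u) / 2 :=
        integral_add ((besselK_integrable (ν + 1) z hz).div_const 2)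
          ((besselK_integrable (ν - 1) z hz).div_const 2)
    _ = (besselK (ν + 1) z + besselK (ν - 1) z) / 2 := by
        rw [integral_div, integral_div, besselK, besselK]; ring

lemma besselK_recurrence (ν z : ℝ) (hz : 0 < z) :
    besselK (ν + 1) z = besselK (ν - 1) z + 2 * ν / z * besselK ν z := by
  set U : ℝ → ℝ := fun x => Real.sinh (ν * x) with hU
  set U' : ℝ → ℝ := fun x => ν * Real.cosh (ν * x) with hU'
  set V : ℝ → ℝ := fun x => -Real.exp (-z * Real.cosh x) / z with hV
  set V' : ℝ → ℝ := fun x => Real.sinh x * Real.exp (-z * Real.cosh x) with hV'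
  have hu : ∀ x ∈ Set.Ioi (0:ℝ), HasDerivAt U (U' x) x := by
    intro x _
    have h := ((hasDerivAt_id x).const_mul ν).sinh
    refine h.congr_deriv ?_
    simp [hU']; ring
  have hv : ∀ x ∈ Set.Ioi (0:ℝ), HasDerivAt V (V' x) x := by
    intro x _
    have h0 : HasDerivAt Real.cosh (Real.sinh x) x := Real.hasDerivAt_cosh x
    have h3 := ((h0.const_mul (-z)).exp).neg.div_const z
    refine h3.congr_deriv ?_
    simp only [hV']
    field_simp
  have habs : ∀ x : ℝ, 0 ≤ x → |Real.sinh (ν * x)| ≤ Real.exp (|ν| * x) := by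
    intro x hx
    have := abs_sinh_le_exp_abs (ν * x)
    rwa [abs_mul, abs_of_nonneg hx] at this
  have huv' : IntegrableOn (U * V') (Set.Ioi (0:ℝ)) := by
    refine integrable_of_le_exp hz 1 (|ν| + 1)
      (Continuous.aestronglyMeasurable (by simp only [hU, hV', Pi.mul_def]; fun_prop)) ?_
    intro x hx
    have hx0 : (0:ℝ) ≤ x := le_of_lt hx
    have h1 := habs x hx0
    have h2 : |Real.sinh x| ≤ Real.exp x := by
      have := abs_sinh_le_exp_abs x; rwa [abs_of_nonneg hx0] at this
    simp only [Pi.mul_apply, hU, hV', one_mul]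
    rw [abs_mul, abs_mul, abs_of_pos (Real.exp_pos _)]
    calc |Real.sinh (ν * x)| * (|Real.sinh x| * Real.exp (-z * Real.cosh x))
        ≤ Real.exp (|ν| * x) * (Real.exp x * Real.exp (-z * Real.cosh x)) := by
          apply mul_le_mul h1 ?_ (by positivity) (by positivity)
          exact mul_le_mul_of_nonneg_right h2 (Real.exp_pos _).le
      _ = Real.exp ((|ν| + 1) * x - z * Real.cosh x) := by
          rw [← Real.exp_add, ← Real.exp_add]; congr 1; ring
  have hu'v : IntegrableOn (U' * V) (Set.Ioi (0:ℝ)) := by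
    refine integrable_of_le_exp hz (|ν| / z) |ν|
      (Continuous.aestronglyMeasurable (by simp only [hU', hV, Pi.mul_def]; fun_prop)) ?_
    intro x hx
    have hx0 : (0:ℝ) ≤ x := le_of_lt hx
    have h2 : Real.cosh (ν * x) ≤ Real.exp (|ν| * x) := by
      have := cosh_le_exp_abs (ν * x); rwa [abs_mul, abs_of_nonneg hx0] at this
    simp only [Pi.mul_apply, hU', hV]
    rw [abs_mul, abs_mul, abs_div, abs_neg, abs_of_pos (Real.exp_pos _),
      abs_of_pos hz, abs_of_pos (Real.cosh_pos _)]
    rw [div_eq_mul_inv, div_eq_mul_inv]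
    calc |ν| * Real.cosh (ν * x) * (Real.exp (-z * Real.cosh x) * z⁻¹)
        = |ν| * z⁻¹ * (Real.cosh (ν * x) * Real.exp (-z * Real.cosh x)) := by ring
      _ ≤ |ν| * z⁻¹ * (Real.exp (|ν| * x) * Real.exp (-z * Real.cosh x)) := by
          apply mul_le_mul_of_nonneg_left ?_ (by positivity)
          exact mul_le_mul_of_nonneg_right h2 (Real.exp_pos _).le
      _ = |ν| * z⁻¹ * Real.exp (|ν| * x - z * Real.cosh x) := by
          rw [← Real.exp_add]; congr 1; ring
  have h_zero : Tendsto (U * V) (nhdsWithin 0 (Set.Ioi 0)) (nhds 0) := by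
    have hc : Continuous (U * V) := by
      simp only [hU, hV, Pi.mul_def]; fun_prop
    have h2 : Tendsto (U * V) (nhdsWithin 0 (Set.Ioi 0)) (nhds ((U * V) 0)) :=
      (hc.tendsto 0).mono_left nhdsWithin_le_nhds
    simpa [hU, hV] using h2
  have h_infty : Tendsto (U * V) atTop (nhds 0) := by
    apply squeeze_zero_norm' (a := fun x => Real.exp (2 * (|ν| + 1) ^ 2 / z) / z * Real.exp (-x))
    · filter_upwards [eventually_ge_atTop (0:ℝ)] with x hx0
      have h1 := habs x hx0
      have hb := key_bound (c := |ν|) hz hx0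
      rw [abs_abs] at hb
      simp only [Pi.mul_apply, hU, hV, norm_mul, Real.norm_eq_abs]
      rw [abs_div, abs_neg, abs_of_pos (Real.exp_pos _), abs_of_pos hz]
      calc |Real.sinh (ν * x)| * (Real.exp (-z * Real.cosh x) / z)
          ≤ Real.exp (|ν| * x) * (Real.exp (-z * Real.cosh x) / z) := by
            apply mul_le_mul_of_nonneg_right h1 (by positivity)
        _ = Real.exp (|ν| * x - z * Real.cosh x) / z := by
            rw [← mul_div_assoc, ← Real.exp_add]; congr 2; ring
        _ ≤ Real.exp (2 * (|ν| + 1) ^ 2 / z - x) / z := by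
            gcongr
        _ = Real.exp (2 * (|ν| + 1) ^ 2 / z) / z * Real.exp (-x) := by
            rw [Real.exp_sub, Real.exp_neg]; ring
    · have := Real.tendsto_exp_neg_atTop_nhds_zero.const_mul
        (Real.exp (2 * (|ν| + 1) ^ 2 / z) / z)
      simpa using this
  have ibp := integral_Ioi_mul_deriv_eq_deriv_mul hu hv huv' hu'v h_zero h_infty
  -- ∫ U * V' = 0 - 0 - ∫ U' * V
  have hUV : (∫ x in Set.Ioi (0:ℝ), U' x * V x) = -(ν / z) * besselK ν z := by
    have hpt : ∀ x : ℝ, U' x * V x =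
        -(ν / z) * (Real.exp (-z * Real.cosh x) * Real.cosh (ν * x)) := by
      intro x
      simp only [hU', hV, div_eq_mul_inv, neg_mul, mul_neg]
      ring
    rw [integral_congr_ae (Eventually.of_forall hpt), integral_const_mul]
    rfl
  have hmain : (∫ x in Set.Ioi (0:ℝ), U x * V' x) = ν / z * besselK ν z := by
    rw [ibp, hUV]; ring
  -- relate to besselK difference
  have hdiff : besselK (ν + 1) z - besselK (ν - 1) z =
      2 * ∫ x in Set.Ioi (0:ℝ), U x * V' x := by
    rw [besselK, besselK, ← integral_sub (besselK_integrable _ _ hz) (besselK_integrable _ _ hz),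
      ← integral_const_mul]
    apply integral_congr_ae (Eventually.of_forall ?_)
    intro x
    have e1 : (ν + 1) * x = ν * x + x := by ring
    have e2 : (ν - 1) * x = ν * x - x := by ring
    simp only [hU, hV']
    rw [e1, e2, Real.cosh_add, Real.cosh_sub]
    ring
  rw [hmain] at hdiff
  have : besselK (ν + 1) z - besselK (ν - 1) z = 2 * ν / z * besselK ν z := by
    rw [hdiff]; ring
  linarith


/-- Lemma 3.1(2): for `ν > 1`, `z K_ν'(z)/K_ν(z) → -ν` as `z → 0⁺`. -/
theorem besselK_logDeriv_tendsto_zero (ν : ℝ) (hν : 1 < ν) :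
    Tendsto (fun z : ℝ => z * deriv (besselK ν) z / besselK ν z)
      (nhdsWithin 0 (Set.Ioi 0)) (nhds (-ν)) := by
  have key : ∀ z ∈ Set.Ioi (0:ℝ), z * deriv (besselK ν) z / besselK ν z
      = -ν - z * (besselK (ν - 1) z / besselK ν z) := by
    intro z hz
    have hz0 : (0:ℝ) < z := hz
    have hK : 0 < besselK ν z := besselK_pos ν z hz0
    rw [besselK_deriv_eq ν z hz0, besselK_recurrence ν z hz0]
    field_simp
    ring
  have hratio : Tendsto (fun z : ℝ => z * (besselK (ν - 1) z / besselK ν z))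
      (nhdsWithin 0 (Set.Ioi 0)) (nhds 0) := by
    apply tendsto_of_tendsto_of_tendsto_of_le_of_le' tendsto_const_nhds
      ((continuous_id.tendsto 0).mono_left nhdsWithin_le_nhds)
    · filter_upwards [self_mem_nhdsWithin] with z hz
      have hz0 : (0:ℝ) < z := hz
      exact mul_nonneg hz0.le
        (div_nonneg (besselK_pos _ _ hz0).le (besselK_pos _ _ hz0).le)
    · filter_upwards [self_mem_nhdsWithin] with z hz
      have hz0 : (0:ℝ) < z := hz
      have h1 : besselK (ν - 1) z ≤ besselK ν z :=
        besselK_mono (ν - 1) ν z (by linarith) (by linarith) hz0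
      have h2 : besselK (ν - 1) z / besselK ν z ≤ 1 :=
        (div_le_one (besselK_pos ν z hz0)).2 h1
      calc z * (besselK (ν - 1) z / besselK ν z) ≤ z * 1 :=
            mul_le_mul_of_nonneg_left h2 hz0.le
        _ = z := mul_one z
  have hfinal : Tendsto (fun z : ℝ => -ν - z * (besselK (ν - 1) z / besselK ν z))
      (nhdsWithin 0 (Set.Ioi 0)) (nhds (-ν)) := by
    simpa using (tendsto_const_nhds (x := -ν)).sub hratio
  refine hfinal.congr' ?_
  filter_upwards [self_mem_nhdsWithin] with z hz
  exact (key z hz).symm
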